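/- Let m be a positive integer and let G be an edge-weighted complete graph (edges have nonnegative real weights) in which every edge joining two vertices of weight at least m has weight at least 1 (the weight of a vertex is the sum of the weights of its incident edges). Then G contains an m-independent set of size at least ⌈∑_{u∈V(G)} f_m(wt_G(u))⌉, where f_m(x) = 1 − x/(2m) for x ≤ m and f_m(x) = (m+1)/(2x+2) for x ≥ m, and an m-independent set is a set S of vertices such that every vertex of the induced edge-weighted subgraph G[S] has weight strictly less than m. -/

import Mathlib

lemma frac_le_frac (p q r s : ℝ) (hq : 0 < q) (hs : 0 < s) (h : p * s ≤ r * q) :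
    p / q ≤ r / s := by
  rw [div_le_div_iff₀ hq hs]; linarith

lemma aux_f_le_one (M x : ℝ) (hM : 1 ≤ M) (hx : 0 ≤ x) :
    (if x ≤ M then 1 - x / (2*M) else (M+1)/(2*x+2)) ≤ 1 := by
  split_ifs with h
  · have : 0 ≤ x / (2*M) := by positivity
    linarith
  · push_neg at h
    rw [div_le_one (by nlinarith)]
    nlinarith

lemma aux_f_heavy (M W : ℝ) (hM : 1 ≤ M) (hW : M ≤ W) :
    (if W ≤ M then 1 - W / (2*M) else (M+1)/(2*W+2)) ≤ (M+1)/(2*(W+1)) := by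
  have hM0 : (0:ℝ) < M := by linarith
  split_ifs with h
  · have hWM : W = M := le_antisymm h hW
    subst hWM
    have h1 : W / (2*W) = 1/2 := by
      rw [div_eq_div_iff (by linarith) (by norm_num)]; ring
    have h2 : (W+1)/(2*(W+1)) = 1/2 := by
      rw [div_eq_div_iff (by linarith) (by norm_num)]; ring
    rw [h1, h2]; norm_num
  · exact frac_le_frac (M+1) (2*W+2) (M+1) (2*(W+1)) (by nlinarith) (by nlinarith)
      (by nlinarith)

-- Case A pointwise gain bound: W ≥ M+1
lemma gainA (M W a d : ℝ) (hM : 1 ≤ M) (hW : M + 1 ≤ W) (hd0 : 0 ≤ d) (hda : d ≤ a)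
    (hheavy : M ≤ a → 1 ≤ d ∧ a ≤ W) :
    d * ((M+1)/(2*W*(W+1))) ≤
      (if a - d ≤ M then 1 - (a-d) / (2*M) else (M+1)/(2*(a-d)+2))
      - (if a ≤ M then 1 - a / (2*M) else (M+1)/(2*a+2)) := by
  have hM0 : (0:ℝ) < M := by linarith
  have hW0 : (0:ℝ) < W := by linarith
  have ha0 : 0 ≤ a := le_trans hd0 hda
  rcases le_or_gt a M with hl | hh
  · rw [if_pos (by linarith : a - d ≤ M), if_pos hl]
    have h1 : (1 - (a-d)/(2*M)) - (1 - a/(2*M)) = d / (2*M) := by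
      field_simp; ring
    rw [show (1 - (a-d)/(2*M)) - (1 - a/(2*M)) = d / (2*M) from h1]
    have hq1 : (0:ℝ) ≤ W*(W+1) - M*(M+1) := by nlinarith
    have e : (d*(M+1)) / (2*W*(W+1)) ≤ d / (2*M) :=
      frac_le_frac (d*(M+1)) (2*W*(W+1)) d (2*M) (by nlinarith) (by nlinarith)
        (by nlinarith [mul_nonneg hd0 hq1])
    calc d * ((M+1)/(2*W*(W+1))) = (d*(M+1)) / (2*W*(W+1)) := by ring
      _ ≤ d / (2*M) := e
  · obtain ⟨hd1, haW⟩ := hheavy hh.le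
    rcases le_or_gt (a - d) M with hc | hnc
    · -- crossing case
      rw [if_pos hc, if_neg (not_le.2 hh)]
      have hid : (1 - (a-d)/(2*M)) - (M+1)/(2*a+2) =
          (M - (a - d))/(2*M) + (a - M)/(2*(a+1)) := by
        field_simp; ring
      rw [show (1 - (a-d)/(2*M)) - (M+1)/(2*a+2) =
          (M - (a - d))/(2*M) + (a - M)/(2*(a+1)) from hid]
      have hq1 : (0:ℝ) ≤ W*(W+1) - M*(M+1) := by nlinarith
      have hq2 : (0:ℝ) ≤ M - (a-d) := by linarith
      have e1 : ((M - (a-d)) * (M+1)) / (2*W*(W+1)) ≤ (M - (a-d))/(2*M) :=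
        frac_le_frac _ _ _ _ (by nlinarith) (by nlinarith)
          (by nlinarith [mul_nonneg hq2 hq1])
      have e2 : ((a - M) * (M+1)) / (2*W*(W+1)) ≤ (a - M)/(2*(a+1)) := by
        apply frac_le_frac _ _ _ _ (by nlinarith) (by nlinarith)
        have hp : (M+1)*(a+1) ≤ W*(W+1) :=
          mul_le_mul hW (by linarith) (by linarith) hW0.le
        have hq3 : (0:ℝ) ≤ a - M := by linarith
        have hq4 : (0:ℝ) ≤ W*(W+1) - (M+1)*(a+1) := by linarith
        nlinarith [mul_nonneg hq3 hq4]
      calc d * ((M+1)/(2*W*(W+1)))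
          = ((M - (a-d)) * (M+1)) / (2*W*(W+1)) + ((a - M) * (M+1)) / (2*W*(W+1)) := by
            ring
        _ ≤ (M - (a - d))/(2*M) + (a - M)/(2*(a+1)) := add_le_add e1 e2
    · -- fully heavy case
      rw [if_neg (not_le.2 hnc), if_neg (not_le.2 hh)]
      have hid : (M+1)/(2*(a-d)+2) - (M+1)/(2*a+2) =
          ((M+1) * d) / ((2*(a-d)+2)*(2*a+2)) * 2 := by
        rw [div_sub_div _ _ (by nlinarith) (by nlinarith)]
        rw [div_mul_eq_mul_div, div_eq_div_iff (by nlinarith) (by nlinarith)]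
        ring
      rw [show (M+1)/(2*(a-d)+2) - (M+1)/(2*a+2) =
          ((M+1) * d) / ((2*(a-d)+2)*(2*a+2)) * 2 from hid]
      have e : (d*(M+1)) / (2*W*(W+1)) ≤ ((M+1)*d*2) / ((2*(a-d)+2)*(2*a+2)) := by
        apply frac_le_frac _ _ _ _ (by nlinarith) (by nlinarith)
        have hp : (a-d+1)*(a+1) ≤ W*(W+1) :=
          mul_le_mul (by linarith) (by linarith) (by nlinarith) hW0.le
        have hq5 : (0:ℝ) ≤ d*(M+1) := by nlinarith
        have hq6 : (0:ℝ) ≤ W*(W+1) - (a-d+1)*(a+1) := by linarith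
        nlinarith [mul_nonneg hq5 hq6]
      calc d * ((M+1)/(2*W*(W+1))) = (d*(M+1)) / (2*W*(W+1)) := by ring
        _ ≤ ((M+1)*d*2) / ((2*(a-d)+2)*(2*a+2)) := e
        _ = ((M+1) * d) / ((2*(a-d)+2)*(2*a+2)) * 2 := by ring

-- Case B pointwise gain bound: M ≤ W ≤ M+1
lemma gainB (M W a d : ℝ) (hM : 1 ≤ M) (hWl : M ≤ W) (hWu : W ≤ M + 1)
    (hd0 : 0 ≤ d) (hda : d ≤ a) (hheavy : M ≤ a → 1 ≤ d ∧ a ≤ W) :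
    d * ((1 + M - W)/(2*M) + (W - M)/(2*(W+1))) ≤
      (if a - d ≤ M then 1 - (a-d) / (2*M) else (M+1)/(2*(a-d)+2))
      - (if a ≤ M then 1 - a / (2*M) else (M+1)/(2*a+2)) := by
  have hM0 : (0:ℝ) < M := by linarith
  have ha0 : 0 ≤ a := le_trans hd0 hda
  rcases le_or_gt a M with hl | hh
  · rw [if_pos (by linarith : a - d ≤ M), if_pos hl]
    have h1 : (1 - (a-d)/(2*M)) - (1 - a/(2*M)) = d / (2*M) := by
      field_simp; ring
    rw [show (1 - (a-d)/(2*M)) - (1 - a/(2*M)) = d / (2*M) from h1]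
    have hrate : (1 + M - W)/(2*M) + (W - M)/(2*(W+1)) ≤ 1/(2*M) := by
      have hq7 : (0:ℝ) ≤ (W - M) * (W + 1 - M) :=
        mul_nonneg (by linarith) (by linarith)
      have h2 : (W - M)/(2*(W+1)) ≤ (W - M)/(2*M) :=
        frac_le_frac _ _ _ _ (by nlinarith) (by nlinarith) (by nlinarith [hq7])
      have h3 : (1 + M - W)/(2*M) + (W-M)/(2*M) = 1/(2*M) := by ring
      linarith
    calc d * ((1 + M - W)/(2*M) + (W - M)/(2*(W+1)))
        ≤ d * (1/(2*M)) := mul_le_mul_of_nonneg_left hrate hd0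
      _ = d / (2*M) := by ring
  · obtain ⟨hd1, haW⟩ := hheavy hh.le
    have hc : a - d ≤ M := by linarith
    rw [if_pos hc, if_neg (not_le.2 hh)]
    have hid : (1 - (a-d)/(2*M)) - (M+1)/(2*a+2) =
        (M - (a-d))/(2*M) + (a - M)/(2*(a+1)) := by
      field_simp; ring
    rw [show (1 - (a-d)/(2*M)) - (M+1)/(2*a+2) =
        (M - (a-d))/(2*M) + (a - M)/(2*(a+1)) from hid]
    have he : 0 ≤ d*(W-M) - (a - M) := by nlinarith
    have hq8 : (0:ℝ) ≤ (a - M) * (W - a) := mul_nonneg (by linarith) (by linarith)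
    have k1 : (a-M)/(2*(W+1)) ≤ (a - M)/(2*(a+1)) :=
      frac_le_frac _ _ _ _ (by nlinarith) (by nlinarith) (by nlinarith [hq8])
    have hq9 : (0:ℝ) ≤ (d*(W-M) - (a-M)) * (W + 1 - M) :=
      mul_nonneg he (by linarith)
    have k2 : (d*(W-M) - (a-M)) / (2*(W+1)) ≤ (d*(W-M) - (a-M)) / (2*M) :=
      frac_le_frac _ _ _ _ (by nlinarith) (by nlinarith) (by nlinarith [hq9])
    have expand : d * ((1 + M - W)/(2*M) + (W - M)/(2*(W+1)))
        = ((M - (a-d)) - (d*(W-M) - (a-M)))/(2*M)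
          + ((a-M) + (d*(W-M) - (a-M)))/(2*(W+1)) := by
      field_simp
      ring
    rw [expand]
    have s1 : ((M - (a-d)) - (d*(W-M) - (a-M)))/(2*M)
        = (M - (a-d))/(2*M) - (d*(W-M) - (a-M))/(2*M) := by ring
    have s2 : ((a-M) + (d*(W-M) - (a-M)))/(2*(W+1))
        = (a-M)/(2*(W+1)) + (d*(W-M) - (a-M))/(2*(W+1)) := by ring
    rw [s1, s2]
    linarith


theorem stmt_14 (m : ℕ) (hm : 0 < m) (f : ℝ → ℝ)
    (hf : ∀ x : ℝ, f x = if x ≤ m then 1 - x / (2 * m) else (m + 1) / (2 * x + 2))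
    (V : Type*) [Fintype V] [DecidableEq V]
    (w : V → V → ℝ) (hsymm : ∀ u x : V, w u x = w x u)
    (hnonneg : ∀ u x : V, 0 ≤ w u x)
    (wt : V → ℝ) (hwt : ∀ u : V, wt u = ∑ x ∈ Finset.univ.erase u, w u x)
    (hedge : ∀ u x : V, u ≠ x → (m : ℝ) ≤ wt u → (m : ℝ) ≤ wt x → 1 ≤ w u x) :
    ∃ S : Finset V,
      (∀ u ∈ S, ∑ x ∈ S.erase u, w u x < m) ∧
      ⌈∑ u : V, f (wt u)⌉ ≤ (S.card : ℤ) := by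
  have hM : (1:ℝ) ≤ (m:ℝ) := by exact_mod_cast hm
  set M : ℝ := (m:ℝ) with hMdef
  -- rewrite f
  have hf' : ∀ x : ℝ, f x = if x ≤ M then 1 - x / (2*M) else (M+1)/(2*x+2) := by
    intro x; rw [hf x]
  -- main induction
  have main : ∀ T : Finset V, ∃ S : Finset V,
      (∀ u ∈ S, ∑ x ∈ S.erase u, w u x < M) ∧
      ⌈∑ u ∈ T, f (∑ x ∈ T.erase u, w u x)⌉ ≤ (S.card : ℤ) := by
    intro T
    induction T using Finset.strongInduction with
    | _ T ih =>
      by_cases hlight : ∀ u ∈ T, ∑ x ∈ T.erase u, w u x < M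
      · refine ⟨T, hlight, ?_⟩
        rw [Int.ceil_le]
        push_cast
        calc ∑ u ∈ T, f (∑ x ∈ T.erase u, w u x)
            ≤ ∑ u ∈ T, 1 := by
              apply Finset.sum_le_sum
              intro u hu
              rw [hf']
              exact aux_f_le_one M _ hM (Finset.sum_nonneg fun x _ => hnonneg u x)
          _ = (T.card : ℝ) := by simp
      · push_neg at hlight
        obtain ⟨u0, hu0T, hu0⟩ := hlight
        -- pick heavy vertex of max weight
        have hne : (T.filter (fun u => M ≤ ∑ x ∈ T.erase u, w u x)).Nonempty :=
          ⟨u0, Finset.mem_filter.2 ⟨hu0T, hu0⟩⟩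
        obtain ⟨h, hhmem, hmax⟩ := Finset.exists_max_image _
          (fun u => ∑ x ∈ T.erase u, w u x) hne
        rw [Finset.mem_filter] at hhmem
        obtain ⟨hhT, hhW⟩ := hhmem
        set W : ℝ := ∑ x ∈ T.erase h, w h x with hWdef
        set T' : Finset V := T.erase h with hT'def
        obtain ⟨S, hSind, hScard⟩ := ih T' (Finset.erase_ssubset hhT)
        refine ⟨S, hSind, le_trans (Int.ceil_le_ceil ?_) hScard⟩
        -- key inequality : sum over T ≤ sum over T'
        -- wt in T' :
        have hwt' : ∀ u ∈ T', (∑ x ∈ T'.erase u, w u x)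
            = (∑ x ∈ T.erase u, w u x) - w u h := by
          intro u hu
          have huT : u ∈ T := Finset.mem_of_mem_erase hu
          have hne' : u ≠ h := Finset.ne_of_mem_erase hu
          have hcomm : T'.erase u = (T.erase u).erase h := by
            rw [hT'def, Finset.erase_right_comm]
          rw [hcomm]
          have hhm : h ∈ T.erase u := Finset.mem_erase.2 ⟨hne'.symm, hhT⟩
          have := Finset.sum_erase_add (T.erase u) (fun x => w u x) hhm
          linarith
        -- total of d's
        have hdsum : ∑ u ∈ T', w u h = W := by
          rw [hWdef]
          apply Finset.sum_congr rfl
          intro x _; exact hsymm x h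
        -- per-vertex facts
        have hfacts : ∀ u ∈ T', 0 ≤ w u h ∧ w u h ≤ (∑ x ∈ T.erase u, w u x) ∧
            (M ≤ (∑ x ∈ T.erase u, w u x) → 1 ≤ w u h ∧ (∑ x ∈ T.erase u, w u x) ≤ W) := by
          intro u hu
          have huT : u ∈ T := Finset.mem_of_mem_erase hu
          have hne' : u ≠ h := Finset.ne_of_mem_erase hu
          have hhm : h ∈ T.erase u := Finset.mem_erase.2 ⟨hne'.symm, hhT⟩
          refine ⟨hnonneg u h, ?_, ?_⟩
          · exact Finset.single_le_sum (fun x _ => hnonneg u x) hhm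
          · intro hheavy
            constructor
            · apply hedge u h hne'
              · rw [hwt u]
                refine le_trans hheavy (Finset.sum_le_sum_of_subset_of_nonneg ?_ ?_)
                · exact Finset.erase_subset_erase u (Finset.subset_univ T)
                · intro x _ _; exact hnonneg u x
              · rw [hwt h]
                refine le_trans hhW (Finset.sum_le_sum_of_subset_of_nonneg ?_ ?_)
                · exact Finset.erase_subset_erase h (Finset.subset_univ T)
                · intro x _ _; exact hnonneg h x
            · exact hmax u (Finset.mem_filter.2 ⟨huT, hheavy⟩)
        -- split T sum
        have hsplit : ∑ u ∈ T, f (∑ x ∈ T.erase u, w u x)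
            = (∑ u ∈ T', f (∑ x ∈ T.erase u, w u x)) + f W := by
          rw [hWdef, hT'def]
          exact (Finset.sum_erase_add T _ hhT).symm
        rw [hsplit]
        -- suffices : f W ≤ sum of gains
        have hWnonneg : 0 ≤ W := Finset.sum_nonneg fun x _ => hnonneg h x
        have key : f W ≤ ∑ u ∈ T',
            (f ((∑ x ∈ T.erase u, w u x) - w u h) - f (∑ x ∈ T.erase u, w u x)) := by
          have hfW : f W ≤ (M+1)/(2*(W+1)) := by
            rw [hf']
            exact aux_f_heavy M W hM hhW
          rcases le_or_gt (M+1) W with hA | hB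
          · -- case A
            have hpoint : ∀ u ∈ T', w u h * ((M+1)/(2*W*(W+1))) ≤
                f ((∑ x ∈ T.erase u, w u x) - w u h) - f (∑ x ∈ T.erase u, w u x) := by
              intro u hu
              obtain ⟨h1, h2, h3⟩ := hfacts u hu
              rw [hf', hf']
              exact gainA M W _ _ hM hA h1 h2 h3
            calc f W ≤ (M+1)/(2*(W+1)) := hfW
              _ = W * ((M+1)/(2*W*(W+1))) := by
                  have hWpos : (0:ℝ) < W := by linarith
                  rw [show W * ((M+1)/(2*W*(W+1))) = (W*(M+1))/(2*W*(W+1)) from by ring,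
                    div_eq_div_iff (by nlinarith) (by nlinarith)]
                  ring
              _ = ∑ u ∈ T', w u h * ((M+1)/(2*W*(W+1))) := by
                  rw [← Finset.sum_mul, hdsum]
              _ ≤ _ := Finset.sum_le_sum hpoint
          · -- case B
            have hpoint : ∀ u ∈ T', w u h * ((1 + M - W)/(2*M) + (W - M)/(2*(W+1))) ≤
                f ((∑ x ∈ T.erase u, w u x) - w u h) - f (∑ x ∈ T.erase u, w u x) := by
              intro u hu
              obtain ⟨h1, h2, h3⟩ := hfacts u hu
              rw [hf', hf']
              exact gainB M W _ _ hM hhW hB.le h1 h2 h3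
            have halg : (M+1)/(2*(W+1)) ≤ W * ((1 + M - W)/(2*M) + (W - M)/(2*(W+1))) := by
              rw [div_add_div _ _ (by positivity) (by positivity), ← mul_div_assoc,
                div_le_div_iff₀ (by positivity) (by positivity)]
              nlinarith [mul_nonneg (by linarith : (0:ℝ) ≤ W - M)
                (by nlinarith : (0:ℝ) ≤ (M + 1 - W) * W + M + 1 - W),
                mul_nonneg (by linarith : (0:ℝ) ≤ W - M) (by linarith : (0:ℝ) ≤ M + 1 - W)]
            calc f W ≤ (M+1)/(2*(W+1)) := hfW
              _ ≤ W * ((1 + M - W)/(2*M) + (W - M)/(2*(W+1))) := halg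
              _ = ∑ u ∈ T', w u h * ((1 + M - W)/(2*M) + (W - M)/(2*(W+1))) := by
                  rw [← Finset.sum_mul, hdsum]
              _ ≤ _ := Finset.sum_le_sum hpoint
        have hfinal : ∀ u ∈ T', f ((∑ x ∈ T.erase u, w u x) - w u h)
            = f (∑ x ∈ T'.erase u, w u x) := by
          intro u hu
          rw [hwt' u hu]
        calc (∑ u ∈ T', f (∑ x ∈ T.erase u, w u x)) + f W
            ≤ ∑ u ∈ T', f ((∑ x ∈ T.erase u, w u x) - w u h) := by
              have := Finset.sum_sub_distrib (s := T')
                (f := fun u => f ((∑ x ∈ T.erase u, w u x) - w u h))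
                (g := fun u => f (∑ x ∈ T.erase u, w u x))
              linarith [key, this]
          _ = ∑ u ∈ T', f (∑ x ∈ T'.erase u, w u x) :=
              Finset.sum_congr rfl hfinal
  obtain ⟨S, hS1, hS2⟩ := main Finset.univ
  refine ⟨S, hS1, ?_⟩
  have : ∑ u : V, f (wt u) = ∑ u ∈ Finset.univ, f (∑ x ∈ Finset.univ.erase u, w u x) := by
    apply Finset.sum_congr rfl
    intro u _; rw [hwt u]
  rw [this]
  exact hS2
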